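/- Let P, Q be orthogonal projections with ‖P - Q‖ ≤ δ < 1 and let U = (1-(Q-P)²)^{-1/2}(QP + (1-Q)(1-P)) be the Sz-Nagy transformation. Then ‖1 - U‖ ≤ C δ for a constant C depending only on δ₀ whenever δ ≤ δ₀ < 1. -/

import Mathlib

/-- The Sz-Nagy transformation `U = (1 - (Q-P)²)^{-1/2} (QP + (1-Q)(1-P))`, where the
inverse square root is defined via the continuous functional calculus. -/
noncomputable def szNagy {H : Type*} [NormedAddCommGroup H] [InnerProductSpace ℂ H]
    [CompleteSpace H] (P Q : H →L[ℂ] H) : H →L[ℂ] H :=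
  cfc (fun t : ℝ => (Real.sqrt t)⁻¹) (1 - (Q - P) ^ 2) *
    (Q * P + (1 - Q) * (1 - P))

set_option maxHeartbeats 1000000 in
/-- Let `P, Q` be orthogonal projections with `‖P - Q‖ ≤ δ ≤ δ₀ < 1`, and let `U` be the
Sz-Nagy transformation. Then `‖1 - U‖ ≤ C δ` for a constant `C` depending only on `δ₀`. -/
theorem szNagy_close_to_identity (δ₀ : ℝ) (hδ₀ : 0 ≤ δ₀) (hδ₀' : δ₀ < 1) :
    ∃ C : ℝ, 0 < C ∧
      ∀ (H : Type) [inst1 : NormedAddCommGroup H] [inst2 : InnerProductSpace ℂ H]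
        [inst3 : CompleteSpace H]
        (P Q : H →L[ℂ] H) (δ : ℝ),
        IsIdempotentElem P → IsSelfAdjoint P →
        IsIdempotentElem Q → IsSelfAdjoint Q →
        ‖P - Q‖ ≤ δ → δ ≤ δ₀ →
        ‖1 - szNagy P Q‖ ≤ C * δ := by
  have h0 : (0:ℝ) < 1 - δ₀ ^ 2 := by nlinarith
  set s₀ : ℝ := Real.sqrt (1 - δ₀ ^ 2) with hs₀def
  have hs₀ : 0 < s₀ := Real.sqrt_pos.mpr h0
  have hs₀sq : s₀ ^ 2 = 1 - δ₀ ^ 2 := Real.sq_sqrt h0.le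
  have hs₀le : s₀ ≤ 1 := by nlinarith
  set K : ℝ := s₀⁻¹ with hKdef
  have hK : 0 < K := inv_pos.mpr hs₀
  refine ⟨4 * K, by positivity, ?_⟩
  intro H _ _ _ P Q δ hP hPsa hQ hQsa hPQ hδδ₀
  have hδ0 : 0 ≤ δ := (norm_nonneg _).trans hPQ
  have hδ1 : δ < 1 := lt_of_le_of_lt hδδ₀ hδ₀'
  obtain hH | hH := subsingleton_or_nontrivial H
  · have : Subsingleton (H →L[ℂ] H) := inferInstance
    rw [Subsingleton.elim (1 - szNagy P Q) 0, norm_zero]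
    positivity
  -- main case
  set D : H →L[ℂ] H := Q - P with hDdef
  have hDsa : IsSelfAdjoint D := hQsa.sub hPsa
  have hDnorm : ‖D‖ ≤ δ := by rwa [hDdef, norm_sub_rev]
  set A : H →L[ℂ] H := 1 - D ^ 2 with hAdef
  have hAsa : IsSelfAdjoint A := (IsSelfAdjoint.one (H →L[ℂ] H)).sub (hDsa.pow 2)
  -- spectrum of A
  have hAcfc : A = cfc (fun t : ℝ => 1 - t ^ 2) D := by
    rw [cfc_sub (fun _ => (1:ℝ)) (fun t => t ^ 2) D, cfc_pow_id D 2, cfc_const 1 D, map_one]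
  have hspec : ∀ x ∈ spectrum ℝ A, 1 - δ ^ 2 ≤ x ∧ x ≤ 1 := by
    intro x hx
    rw [hAcfc, cfc_map_spectrum (fun t : ℝ => 1 - t ^ 2) D] at hx
    obtain ⟨t, ht, rfl⟩ := hx
    have h1 : |t| ≤ δ := by
      have := spectrum.norm_le_norm_of_mem ht
      rw [Real.norm_eq_abs] at this
      exact this.trans hDnorm
    have h2 : t ^ 2 ≤ δ ^ 2 := by nlinarith [abs_nonneg t, sq_abs t]
    dsimp only
    constructor
    · linarith
    · nlinarith [sq_nonneg t]
  have hspec_pos : ∀ x ∈ spectrum ℝ A, 1 - δ₀ ^ 2 ≤ x := by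
    intro x hx
    have := (hspec x hx).1
    nlinarith
  set f : ℝ → ℝ := fun t => (Real.sqrt t)⁻¹ with hfdef
  -- the norm of f(A)
  have hfA : ‖cfc f A‖ ≤ K := by
    refine norm_cfc_le hK.le fun x hx => ?_
    have hx1 : 1 - δ₀ ^ 2 ≤ x := hspec_pos x hx
    have hsx : s₀ ≤ Real.sqrt x := Real.sqrt_le_sqrt hx1
    rw [Real.norm_eq_abs, hfdef]
    rw [abs_of_nonneg (by positivity)]
    exact inv_anti₀ hs₀ hsx
  -- the norm of 1 - f(A)
  have h1fA : ‖1 - cfc f A‖ ≤ K * δ := by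
    have hcont : ContinuousOn f (spectrum ℝ A) := by
      refine ContinuousOn.inv₀ (Real.continuous_sqrt.continuousOn) fun x hx => ?_
      have := hspec_pos x hx
      have : 0 < x := by nlinarith
      positivity
    have hone : (1 : H →L[ℂ] H) = cfc (fun _ : ℝ => (1:ℝ)) A := by
      rw [cfc_const 1 A, map_one]
    rw [hone, ← cfc_sub (fun _ => (1:ℝ)) f A (by fun_prop) hcont]
    refine norm_cfc_le (by positivity) fun x hx => ?_
    obtain ⟨hxl, hxu⟩ := hspec x hx
    have hx0 : 0 < x := by nlinarith
    have hsx : s₀ ≤ Real.sqrt x := Real.sqrt_le_sqrt (hspec_pos x hx)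
    have hsx1 : Real.sqrt x ≤ 1 := by
      rw [show (1:ℝ) = Real.sqrt 1 by simp]
      exact Real.sqrt_le_sqrt hxu
    have hsxpos : 0 < Real.sqrt x := Real.sqrt_pos.mpr hx0
    have hfx1 : 1 ≤ f x := by
      rw [hfdef]
      exact (one_le_inv₀ hsxpos).mpr hsx1
    -- f x - 1 ≤ K * δ
    have hx2 : x ≥ 1 - δ ^ 2 := hxl
    have hs2 : Real.sqrt x ^ 2 = x := Real.sq_sqrt hx0.le
    have key : f x - 1 ≤ K * δ := by
      rw [hfdef]
      have h1 : (Real.sqrt x)⁻¹ - 1 = (1 - Real.sqrt x) / Real.sqrt x := by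
        field_simp
      rw [h1, hKdef, div_le_iff₀ hsxpos]
      have hged : 1 - Real.sqrt x ≤ δ ^ 2 := by nlinarith
      have heq : s₀⁻¹ * δ * Real.sqrt x = (δ * Real.sqrt x) / s₀ := by ring
      rw [heq, le_div_iff₀ hs₀]
      have h3 : (1 - Real.sqrt x) * s₀ ≤ δ ^ 2 * s₀ := mul_le_mul_of_nonneg_right hged hs₀.le
      have hδs : δ * s₀ ≤ Real.sqrt x := (mul_le_of_le_one_left hs₀.le hδ1.le).trans hsx
      have h4 : δ ^ 2 * s₀ ≤ δ * Real.sqrt x := by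
        calc δ ^ 2 * s₀ = δ * (δ * s₀) := by ring
          _ ≤ δ * Real.sqrt x := mul_le_mul_of_nonneg_left hδs hδ0
      linarith
    rw [Real.norm_eq_abs]
    rw [abs_sub_comm, abs_of_nonneg (by linarith)]
    linarith [key]
  -- norm of W - 1
  set W : H →L[ℂ] H := Q * P + (1 - Q) * (1 - P) with hWdef
  have hWeq : W = 1 + (2 * Q - 1) * (P - Q) := by
    have h2 : Q * Q = Q := hQ
    rw [hWdef]
    simp only [two_mul, add_mul, sub_mul, mul_sub, mul_one, one_mul, h2]
    abel
  have hQnorm : ‖Q‖ ≤ 1 := by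
    have h := CStarRing.norm_star_mul_self (x := Q)
    rw [hQsa.star_eq, hQ.eq] at h
    nlinarith [norm_nonneg Q]
  have hW1 : ‖W - 1‖ ≤ 3 * δ := by
    rw [hWeq, add_sub_cancel_left]
    calc ‖(2 * Q - 1) * (P - Q)‖ ≤ ‖2 * Q - 1‖ * ‖P - Q‖ := norm_mul_le _ _
      _ ≤ 3 * δ := by
          have h1 : ‖2 * Q - 1‖ ≤ 3 := by
            calc ‖2 * Q - 1‖ ≤ ‖2 * Q‖ + ‖(1 : H →L[ℂ] H)‖ := norm_sub_le _ _
              _ ≤ 2 * ‖Q‖ + 1 := by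
                  rw [two_mul]
                  have := norm_add_le Q Q
                  have h1 : ‖(1 : H →L[ℂ] H)‖ = 1 := norm_one
                  rw [two_mul, h1]
                  gcongr <;> linarith
              _ ≤ 3 := by linarith
          exact mul_le_mul h1 hPQ (norm_nonneg _) (by norm_num)
  -- put together
  have hdecomp : 1 - szNagy P Q = (1 - cfc f A) - cfc f A * (W - 1) := by
    rw [szNagy, ← hfdef]
    have : (1 : H →L[ℂ] H) - (Q - P) ^ 2 = A := by rw [hAdef, hDdef]
    rw [this, ← hWdef]
    noncomm_ring
  rw [hdecomp]
  calc ‖(1 - cfc f A) - cfc f A * (W - 1)‖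
      ≤ ‖1 - cfc f A‖ + ‖cfc f A * (W - 1)‖ := norm_sub_le _ _
    _ ≤ K * δ + ‖cfc f A‖ * ‖W - 1‖ := by
        gcongr
        exact norm_mul_le _ _
    _ ≤ K * δ + K * (3 * δ) := by
        gcongr
    _ = 4 * K * δ := by ring
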